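/- Let a ∈ (0,π). There exists a constant C > 0 (depending on V and a) such that for every z ∈ ℂ and every n ∈ ℕ: (1) |∫_a^π cos(√z x) ((π−x)/(π−a)) ρ(x) sin(nx) dx| ≤ (C/n) e^{π|Im √z|} (1 + |z|/(1 + π|z|^{1/2})); and (2) |∫_a^π F(x,z) ((π−x)/(π−a)) ρ(x) sin(nx) dx| ≤ (C/n) e^{π|Im √z|} (1 + 1/(1 + π|z|^{1/2})). -/

import Mathlib

open MeasureTheory Real Set
namespace TailAux

lemma norm_cos_le (w : ℂ) : ‖Complex.cos w‖ ≤ Real.exp |w.im| := by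
  rw [Complex.cos]
  calc ‖(Complex.exp (w * Complex.I) + Complex.exp (-w * Complex.I)) / 2‖
      = ‖Complex.exp (w * Complex.I) + Complex.exp (-w * Complex.I)‖ / 2 := by
        rw [norm_div]; norm_num
    _ ≤ (‖Complex.exp (w * Complex.I)‖ + ‖Complex.exp (-w * Complex.I)‖) / 2 := by
        gcongr
        exact norm_add_le _ _
    _ ≤ (Real.exp |w.im| + Real.exp |w.im|) / 2 := by
        gcongr
        · rw [Complex.norm_exp]
          apply Real.exp_le_exp.2
          simp only [Complex.mul_re, Complex.I_re, Complex.I_im, mul_zero, mul_one, zero_sub]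
          cases abs_cases w.im <;> linarith [le_abs_self (-w.im), neg_abs_le (-w.im)]
        · rw [Complex.norm_exp]
          apply Real.exp_le_exp.2
          simp only [Complex.neg_re, Complex.neg_im, Complex.mul_re, Complex.I_re, Complex.I_im,
            mul_zero, mul_one, zero_sub, neg_neg]
          exact le_abs_self _
    _ = Real.exp |w.im| := by ring

lemma norm_sin_le (w : ℂ) : ‖Complex.sin w‖ ≤ Real.exp |w.im| := by
  have h := norm_cos_le ((π : ℂ) / 2 - w)
  rw [Complex.cos_pi_div_two_sub] at h
  have him : ((π : ℂ) / 2 - w).im = -w.im := by simp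
  rwa [him, abs_neg] at h

lemma norm_sin_le' (w : ℂ) : ‖Complex.sin w‖ ≤ ‖w‖ * Real.exp |w.im| := by
  have hder : ∀ t : ℝ, HasDerivAt (fun t : ℝ => Complex.sin (w * t))
      (w * Complex.cos (w * t)) t := by
    intro t
    have h1 : HasDerivAt (fun y : ℂ => Complex.sin (w * y)) (Complex.cos (w * t) * w) (t : ℂ) := by
      simpa [Function.comp_def] using (Complex.hasDerivAt_sin (w * (t : ℂ))).comp (t : ℂ)
        ((hasDerivAt_id ((t : ℝ) : ℂ)).const_mul w)
    have := h1.comp_ofReal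
    simpa [mul_comm] using this
  have key := intervalIntegral.integral_eq_sub_of_hasDerivAt
    (f := fun t : ℝ => Complex.sin (w * t)) (f' := fun t : ℝ => w * Complex.cos (w * t))
    (a := 0) (b := 1) (fun t _ => hder t)
    (Continuous.intervalIntegrable (by fun_prop) _ _)
  have h2 : ‖∫ t in (0:ℝ)..1, w * Complex.cos (w * t)‖ ≤ ‖w‖ * Real.exp |w.im| * |1 - 0| := by
    apply intervalIntegral.norm_integral_le_of_norm_le_const
    intro t ht
    rw [Set.uIoc_of_le (by norm_num : (0:ℝ) ≤ 1)] at ht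
    rw [norm_mul]
    gcongr
    calc ‖Complex.cos (w * t)‖ ≤ Real.exp |(w * (t:ℂ)).im| := norm_cos_le _
      _ ≤ Real.exp |w.im| := by
          apply Real.exp_le_exp.2
          have him : (w * (t:ℂ)).im = w.im * t := by simp [Complex.mul_im]
          rw [him, abs_mul]
          have ht1 : |t| ≤ 1 := by
            rw [abs_le]; exact ⟨by linarith [ht.1], ht.2⟩
          calc |w.im| * |t| ≤ |w.im| * 1 := by gcongr
            _ = |w.im| := mul_one _
  rw [key] at h2
  simpa using h2

variable {E : Type*} [NormedAddCommGroup E] [NormedSpace ℝ E] [CompleteSpace E]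

lemma primitive_hasDerivWithinAt {f : ℝ → E} {b x : ℝ}
    (hf : ContinuousOn f (Icc 0 b)) (hx : x ∈ Icc 0 b) :
    HasDerivWithinAt (fun u => ∫ t in (0:ℝ)..u, f t) (f x) (Icc 0 b) x := by
  haveI : Fact (x ∈ Icc (0:ℝ) b) := ⟨hx⟩
  have hint : IntervalIntegrable f volume 0 x := by
    apply (hf.mono _).intervalIntegrable
    rw [uIcc_of_le hx.1]
    exact Icc_subset_Icc le_rfl hx.2
  exact intervalIntegral.integral_hasDerivWithinAt_right hint
    ⟨Icc 0 b, self_mem_nhdsWithin, hf.aestronglyMeasurable measurableSet_Icc⟩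
    (hf x hx)

lemma gronwall_aux {g : ℝ → ℝ} {b K : ℝ} (hK : 0 < K)
    (hc : ContinuousOn g (Icc 0 b)) (h0 : ∀ t ∈ Icc (0:ℝ) b, 0 ≤ g t)
    (hineq : ∀ x ∈ Icc (0:ℝ) b, g x ≤ 1 + K * ∫ t in (0:ℝ)..x, g t) :
    ∀ x ∈ Icc (0:ℝ) b, g x ≤ Real.exp (K * x) := by
  intro x hx
  set G : ℝ → ℝ := fun x => ∫ t in (0:ℝ)..x, g t with hG
  have hGd : ∀ y ∈ Icc (0:ℝ) b, HasDerivWithinAt G (g y) (Icc 0 b) y := fun y hy =>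
    primitive_hasDerivWithinAt hc hy
  have hGnn : ∀ y ∈ Icc (0:ℝ) b, 0 ≤ G y := by
    intro y hy
    apply intervalIntegral.integral_nonneg hy.1
    intro t ht
    exact h0 t ⟨ht.1, le_trans ht.2 hy.2⟩
  have key : ∀ y ∈ Icc (0:ℝ) b, ‖G y‖ ≤ gronwallBound 0 K 1 (y - 0) := by
    apply norm_le_gronwallBound_of_norm_deriv_right_le
      (f := G) (f' := g) (δ := 0) (K := K) (ε := 1) (a := 0) (b := b)
    · exact fun y hy => (hGd y hy).continuousWithinAt
    · intro t ht
      apply (hGd t ⟨ht.1, ht.2.le⟩).mono_of_mem_nhdsWithin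
      rw [mem_nhdsWithin]
      exact ⟨Iio b, isOpen_Iio, ht.2, fun y hy => ⟨le_trans ht.1 hy.2, hy.1.le⟩⟩
    · simp [hG]
    · intro t ht
      rw [Real.norm_eq_abs, Real.norm_eq_abs, abs_of_nonneg (h0 t ⟨ht.1, ht.2.le⟩),
        abs_of_nonneg (hGnn t ⟨ht.1, ht.2.le⟩)]
      linarith [hineq t ⟨ht.1, ht.2.le⟩]
  have h1 := key x hx
  rw [Real.norm_eq_abs, abs_of_nonneg (hGnn x hx), sub_zero,
    gronwallBound_of_K_ne_0 hK.ne'] at h1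
  have h2 := hineq x hx
  have : K * G x ≤ Real.exp (K * x) - 1 := by
    have := mul_le_mul_of_nonneg_left h1 hK.le
    calc K * G x ≤ K * (0 * Real.exp (K * x) + 1 / K * (Real.exp (K * x) - 1)) := this
      _ = Real.exp (K * x) - 1 := by field_simp; ring
  linarith

lemma ibp_aux {a b : ℝ} (hab : a < b) (h h' : ℝ → ℂ) (B₀ B₁ : ℝ)
    (hc : ContinuousOn h (Icc a b)) (hd : ∀ x ∈ Ioo a b, HasDerivAt h (h' x) x)
    (hc' : ContinuousOn h' (Icc a b)) (hb0 : h b = 0)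
    (hB₀ : ‖h a‖ ≤ B₀) (hB₁ : ∀ x ∈ Ioc a b, ‖h' x‖ ≤ B₁)
    (n : ℕ) (hn : 0 < n) :
    ‖∫ x in a..b, h x * Complex.sin ((n:ℂ) * x)‖ ≤ (B₀ + (b - a) * B₁) / n := by
  have hnR : (0:ℝ) < n := by exact_mod_cast hn
  have hnC : ((n:ℂ)) ≠ 0 := by exact_mod_cast hn.ne'
  set v : ℝ → ℂ := fun x => -Complex.cos ((n:ℂ) * x) / n with hv
  have hvc : Continuous v := by fun_prop
  have hdv : ∀ x : ℝ, HasDerivAt v (Complex.sin ((n:ℂ) * x)) x := by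
    intro x
    have h1 : HasDerivAt (fun y : ℂ => Complex.cos ((n:ℂ) * y))
        (-Complex.sin ((n:ℂ) * x) * n) (x : ℂ) := by
      simpa [Function.comp_def] using (Complex.hasDerivAt_cos ((n:ℂ) * (x:ℂ))).comp (x : ℂ)
        ((hasDerivAt_id ((x:ℝ) : ℂ)).const_mul (n:ℂ))
    have h2 := (h1.comp_ofReal.neg).div_const (n:ℂ)
    refine h2.congr_deriv ?_
    field_simp
  have hvb : ∀ x : ℝ, ‖v x‖ ≤ 1 / n := by
    intro x
    have hcast : ((n:ℂ) * (x:ℂ)) = ((n * x : ℝ) : ℂ) := by push_cast; ring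
    rw [hv]
    simp only [hcast, ← Complex.ofReal_cos, norm_div, norm_neg, Complex.norm_real,
      Complex.norm_natCast, Real.norm_eq_abs]
    gcongr
    exact Real.abs_cos_le_one _
  have hsc : Continuous fun x : ℝ => Complex.sin ((n:ℂ) * x) := by fun_prop
  have hint1 : IntervalIntegrable (fun x => h' x * v x) volume a b := by
    apply ContinuousOn.intervalIntegrable
    rw [uIcc_of_le hab.le]
    exact hc'.mul hvc.continuousOn
  have hint2 : IntervalIntegrable (fun x => h x * Complex.sin ((n:ℂ) * x)) volume a b := by
    apply ContinuousOn.intervalIntegrable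
    rw [uIcc_of_le hab.le]
    exact hc.mul hsc.continuousOn
  have key : ∫ x in a..b, (h' x * v x + h x * Complex.sin ((n:ℂ) * x)) =
      h b * v b - h a * v a := by
    apply intervalIntegral.integral_eq_sub_of_hasDeriv_right_of_le hab.le
    · exact hc.mul hvc.continuousOn
    · intro x hx
      exact (((hd x hx).mul (hdv x))).hasDerivWithinAt
    · exact hint1.add hint2
  rw [intervalIntegral.integral_add hint1 hint2, hb0, zero_mul, zero_sub] at key
  have heq : ∫ x in a..b, h x * Complex.sin ((n:ℂ) * x) =
      -(h a * v a) - ∫ x in a..b, h' x * v x := by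
    rw [← key]; ring
  rw [heq]
  have hB₁nn : 0 ≤ B₁ := le_trans (norm_nonneg _) (hB₁ b ⟨hab, le_rfl⟩)
  have h3 : ‖∫ x in a..b, h' x * v x‖ ≤ B₁ / n * (b - a) := by
    have := intervalIntegral.norm_integral_le_of_norm_le_const (C := B₁ / n)
      (f := fun x => h' x * v x) (a := a) (b := b) ?_
    · calc ‖∫ x in a..b, h' x * v x‖ ≤ B₁ / n * |b - a| := this
        _ = B₁ / n * (b - a) := by rw [abs_of_nonneg (by linarith)]
    · intro x hx
      rw [uIoc_of_le hab.le] at hx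
      rw [norm_mul]
      calc ‖h' x‖ * ‖v x‖ ≤ B₁ * (1 / n) :=
            mul_le_mul (hB₁ x hx) (hvb x) (norm_nonneg _) hB₁nn
        _ = B₁ / n := by ring
  calc ‖-(h a * v a) - ∫ x in a..b, h' x * v x‖
      ≤ ‖h a * v a‖ + ‖∫ x in a..b, h' x * v x‖ := by
        rw [sub_eq_add_neg]
        exact le_trans (norm_add_le _ _) (by rw [norm_neg, norm_neg])
    _ ≤ B₀ * (1 / n) + B₁ / n * (b - a) := by
        gcongr
        rw [norm_mul]
        exact mul_le_mul hB₀ (hvb a) (norm_nonneg _) (le_trans (norm_nonneg _) hB₀)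
    _ = (B₀ + (b - a) * B₁) / n := by ring

end TailAux

set_option maxHeartbeats 2000000 in
open scoped Classical in
/-- Two estimates on `[a,π]` with `ρ(x) = ½∫₀^x V − (x/2π)∫₀^π V` and
`F(x,z) = ξ(x,z) − cos(√z x)`, for all `z ∈ ℂ` and `n ∈ ℕ`, `n ≥ 1`. -/
theorem tail_integral_estimates
    (V : ℝ → ℝ)
    (hV : ∃ V' : ℝ → ℝ, IntegrableOn V' (Icc 0 π) ∧
      ∀ x ∈ Icc (0:ℝ) π, V x = V 0 + ∫ t in (0:ℝ)..x, V' t)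
    (ξ ξ' : ℂ → ℝ → ℂ)
    (hξ0 : ∀ z, ξ z 0 = 1)
    (hξ'0 : ∀ z, ξ' z 0 = 0)
    (hξd : ∀ z, ∀ x ∈ Icc (0:ℝ) π, HasDerivWithinAt (ξ z) (ξ' z x) (Icc 0 π) x)
    (hξd' : ∀ z, ∀ x ∈ Icc (0:ℝ) π,
      HasDerivWithinAt (ξ' z) (((V x : ℂ) - z) * ξ z x) (Icc 0 π) x)
    (hent : ∀ x ∈ Icc (0:ℝ) π, Differentiable ℂ (fun z => ξ z x))
    (hreal : ∀ (r x : ℝ), (ξ (r : ℂ) x).im = 0)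
    (lam : ℕ → ℝ)
    (hmono : StrictMono lam)
    (hspec : ∀ r : ℝ, ξ' (r : ℂ) π = 0 ↔ ∃ n, r = lam n)
    (a : ℝ) (ha0 : 0 < a) (haπ : a < π) :
    ∃ C > 0, ∀ z : ℂ, ∀ n : ℕ, 0 < n →
      (‖∫ x in a..π, Complex.cos (z ^ (1/2 : ℂ) * x) * (↑((π - x) / (π - a)) : ℂ) *
            (↑((1/2) * (∫ y in (0:ℝ)..x, V y) - (x / (2 * π)) * ∫ y in (0:ℝ)..π, V y) : ℂ) *
            Complex.sin ((n : ℂ) * x)‖ ≤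
        (C / n) * Real.exp (π * |(z ^ (1/2 : ℂ)).im|) *
          (1 + ‖z‖ / (1 + π * Real.sqrt ‖z‖))) ∧
      (‖∫ x in a..π, (ξ z x - Complex.cos (z ^ (1/2 : ℂ) * x)) * (↑((π - x) / (π - a)) : ℂ) *
            (↑((1/2) * (∫ y in (0:ℝ)..x, V y) - (x / (2 * π)) * ∫ y in (0:ℝ)..π, V y) : ℂ) *
            Complex.sin ((n : ℂ) * x)‖ ≤
        (C / n) * Real.exp (π * |(z ^ (1/2 : ℂ)).im|) *
          (1 + 1 / (1 + π * Real.sqrt ‖z‖))) := by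
  obtain ⟨V', hV'i, hVeq⟩ := hV
  have hπ : (0:ℝ) < π := Real.pi_pos
  have h0π : (0:ℝ) ≤ π := hπ.le
  have hπa : 0 < π - a := by linarith
  have hIccsub : Icc a π ⊆ Icc (0:ℝ) π := Icc_subset_Icc ha0.le le_rfl
  -- continuity of V
  have hVc : ContinuousOn V (Icc 0 π) := by
    have h1 : ContinuousOn (fun x => V 0 + ∫ t in (0:ℝ)..x, V' t) (Icc 0 π) := by
      apply continuousOn_const.add
      have h2 := intervalIntegral.continuousOn_primitive_interval
        (a := 0) (b := π) (μ := volume) (f := V') ?_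
      · rwa [uIcc_of_le h0π] at h2
      · rwa [uIcc_of_le h0π]
    exact h1.congr fun x hx => hVeq x hx
  obtain ⟨M₀, hM₀⟩ :=
    (isCompact_Icc : IsCompact (Icc (0:ℝ) π)).exists_bound_of_continuousOn hVc
  set M : ℝ := max M₀ 1 with hMdef
  have hM1 : (1:ℝ) ≤ M := le_max_right _ _
  have hM0 : (0:ℝ) < M := lt_of_lt_of_le one_pos hM1
  have hM : ∀ x ∈ Icc (0:ℝ) π, |V x| ≤ M := by
    intro x hx
    calc |V x| = ‖V x‖ := (Real.norm_eq_abs _).symm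
      _ ≤ M₀ := hM₀ x hx
      _ ≤ M := le_max_left _ _
  -- primitive of V
  have hIprim : ∀ x ∈ Icc (0:ℝ) π,
      HasDerivWithinAt (fun u => ∫ t in (0:ℝ)..u, V t) (V x) (Icc 0 π) x :=
    fun x hx => TailAux.primitive_hasDerivWithinAt hVc hx
  have hIcont : ContinuousOn (fun u => ∫ t in (0:ℝ)..u, V t) (Icc 0 π) :=
    fun x hx => (hIprim x hx).continuousWithinAt
  have hIb : ∀ x ∈ Icc (0:ℝ) π, |∫ t in (0:ℝ)..x, V t| ≤ M * x := by
    intro x hx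
    have h1 := intervalIntegral.norm_integral_le_of_norm_le_const (C := M)
      (f := V) (a := 0) (b := x) ?_
    · simpa [sub_zero, abs_of_nonneg hx.1] using h1
    · intro t ht
      rw [uIoc_of_le hx.1] at ht
      rw [Real.norm_eq_abs]
      exact hM t ⟨ht.1.le, le_trans ht.2 hx.2⟩
  set IV : ℝ := ∫ t in (0:ℝ)..π, V t with hIVdef
  have hIVb : |IV| ≤ M * π := hIb π ⟨h0π, le_rfl⟩
  -- ρ
  set ρf : ℝ → ℝ := fun x => 1/2 * (∫ y in (0:ℝ)..x, V y) - x / (2*π) * IV with hρf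
  have hρb : ∀ x ∈ Icc (0:ℝ) π, |ρf x| ≤ π * M := by
    intro x hx
    have h1 := hIb x hx
    have h2 : |x / (2*π) * IV| ≤ M * π / 2 := by
      rw [abs_mul, abs_div, abs_of_nonneg hx.1, abs_of_pos (by linarith : (0:ℝ) < 2*π)]
      calc x / (2*π) * |IV| ≤ π / (2*π) * (M*π) :=
            mul_le_mul ((div_le_div_iff_of_pos_right (by linarith)).2 hx.2) hIVb (abs_nonneg _)
              (by positivity)
        _ = M * π / 2 := by field_simp
    have h3 : |1/2 * (∫ y in (0:ℝ)..x, V y)| ≤ M * π / 2 := by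
      rw [abs_mul, abs_of_nonneg (by norm_num : (0:ℝ) ≤ 1/2)]
      have h4 : M * x ≤ M * π := mul_le_mul_of_nonneg_left hx.2 hM0.le
      linarith
    calc |ρf x| ≤ |1/2 * (∫ y in (0:ℝ)..x, V y)| + |x / (2*π) * IV| := by
          simp only [hρf]; exact abs_sub _ _
      _ ≤ π * M := by linarith
  have hρc : ContinuousOn ρf (Icc 0 π) := by
    apply ContinuousOn.sub
    · exact continuousOn_const.mul hIcont
    · exact (continuousOn_id.div_const _).mul continuousOn_const
  set ρ' : ℝ → ℝ := fun x => 1/2 * V x - 1/(2*π) * IV with hρ'def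
  have hρd : ∀ x ∈ Ioo (0:ℝ) π, HasDerivAt ρf (ρ' x) x := by
    intro x hx
    have h1 : HasDerivAt (fun u => ∫ t in (0:ℝ)..u, V t) (V x) x :=
      (hIprim x ⟨hx.1.le, hx.2.le⟩).hasDerivAt (Icc_mem_nhds hx.1 hx.2)
    have h2 := (h1.const_mul (1/2 : ℝ)).sub
      (((hasDerivAt_id x).div_const (2*π)).mul_const IV)
    exact h2
  have hρ'c : ContinuousOn ρ' (Icc 0 π) := by
    apply ContinuousOn.sub
    · exact continuousOn_const.mul hVc
    · exact continuousOn_const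
  have hρ'b : ∀ x ∈ Icc (0:ℝ) π, |ρ' x| ≤ M := by
    intro x hx
    rw [hρ'def]
    have h1 := hM x hx
    have h2 : |1/(2*π) * IV| ≤ M/2 := by
      rw [abs_mul, abs_of_pos (by positivity : (0:ℝ) < 1/(2*π))]
      calc 1/(2*π) * |IV| ≤ 1/(2*π) * (M*π) :=
            mul_le_mul_of_nonneg_left hIVb (by positivity)
        _ = M/2 := by field_simp
    have h3 : |1/2 * V x| ≤ M/2 := by
      rw [abs_mul, abs_of_nonneg (by norm_num : (0:ℝ) ≤ 1/2)]
      linarith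
    calc |1/2 * V x - 1/(2*π) * IV| ≤ |1/2 * V x| + |1/(2*π) * IV| := abs_sub _ _
      _ ≤ M := by linarith
  -- g = ℓ · ρ
  set g' : ℝ → ℝ := fun x => -1/(π - a) * ρf x + (π - x)/(π - a) * ρ' x with hg'def
  set gR : ℝ → ℝ := fun x => (π - x)/(π - a) * ρf x with hgRdef
  have hℓb : ∀ x ∈ Icc a π, 0 ≤ (π - x)/(π - a) ∧ (π - x)/(π - a) ≤ 1 := by
    intro x hx
    constructor
    · apply div_nonneg (by linarith [hx.2]) hπa.le
    · rw [div_le_one hπa]; linarith [hx.1]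
  have hgd : ∀ x ∈ Ioo a π, HasDerivAt gR (g' x) x := by
    intro x hx
    have hx0 : x ∈ Ioo (0:ℝ) π := ⟨lt_trans ha0 hx.1, hx.2⟩
    have hl : HasDerivAt (fun y : ℝ => (π - y)/(π - a)) (-1/(π-a)) x := by
      exact ((hasDerivAt_id x).const_sub π).div_const (π - a)
    exact hl.mul (hρd x hx0)
  have hgb : ∀ x ∈ Icc a π, |gR x| ≤ π * M := by
    intro x hx
    rw [hgRdef]
    simp only []
    rw [abs_mul, abs_of_nonneg (hℓb x hx).1]
    calc (π - x)/(π - a) * |ρf x| ≤ 1 * (π * M) :=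
          mul_le_mul (hℓb x hx).2 (hρb x (hIccsub hx)) (abs_nonneg _) one_pos.le
      _ = π * M := one_mul _
  have hg'b : ∀ x ∈ Icc a π, |g' x| ≤ π * M / (π - a) + M := by
    intro x hx
    rw [hg'def]
    have h1 : |(-1)/(π - a) * ρf x| ≤ π * M / (π - a) := by
      rw [abs_mul, abs_div, abs_neg, abs_one, abs_of_pos hπa]
      calc 1/(π-a) * |ρf x| ≤ 1/(π-a) * (π * M) :=
            mul_le_mul_of_nonneg_left (hρb x (hIccsub hx)) (by positivity)
        _ = π * M / (π - a) := by ring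
    have h2 : |(π - x)/(π - a) * ρ' x| ≤ M := by
      rw [abs_mul, abs_of_nonneg (hℓb x hx).1]
      calc (π - x)/(π - a) * |ρ' x| ≤ 1 * M :=
            mul_le_mul (hℓb x hx).2 (hρ'b x (hIccsub hx)) (abs_nonneg _) one_pos.le
        _ = M := one_mul _
    calc |(-1)/(π - a) * ρf x + (π - x)/(π - a) * ρ' x|
        ≤ |(-1)/(π - a) * ρf x| + |(π - x)/(π - a) * ρ' x| := abs_add_le _ _
      _ ≤ π * M / (π - a) + M := add_le_add h1 h2
  have hgπ : gR π = 0 := by rw [hgRdef]; simp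
  have hgc : ContinuousOn gR (Icc a π) := by
    apply ContinuousOn.mul
    · exact (continuousOn_const.sub continuousOn_id).div_const _
    · exact hρc.mono hIccsub
  have hg'c : ContinuousOn g' (Icc a π) := by
    apply ContinuousOn.add
    · exact continuousOn_const.mul (hρc.mono hIccsub)
    · exact ((continuousOn_const.sub continuousOn_id).div_const _).mul (hρ'c.mono hIccsub)
  -- constants
  set K : ℝ := π * M + 1 with hKdef
  have hK : 0 < K := by positivity
  set C₀ : ℝ := Real.exp (K * π) with hC₀def
  have hC₀ : 0 < C₀ := Real.exp_pos _
  set CF' : ℝ := π * M * C₀ with hCF'def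
  have hCF' : 0 < CF' := by positivity
  set CF : ℝ := π * (π * M * C₀) with hCFdef
  have hCF : 0 < CF := by positivity
  set G₀ : ℝ := π * M with hG₀def
  have hG₀ : 0 < G₀ := by positivity
  set G₁ : ℝ := π * M / (π - a) + M with hG₁def
  have hG₁ : 0 < G₁ := by positivity
  set C : ℝ := (G₀ + (π-a)*G₁) + (π-a)*G₀*(1+π) + (CF*G₀ + (π-a)*(CF'*G₀ + CF*G₁)) + 1
    with hCdef
  have hC : 0 < C := by positivity
  refine ⟨C, hC, ?_⟩
  intro z n hn
  have hnR : (0:ℝ) < n := by exact_mod_cast hn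
  set s : ℂ := z ^ (1/2 : ℂ) with hs
  have hs2 : s ^ 2 = z := by
    rw [hs]
    have h2 : (1/2 : ℂ) = ((2:ℕ) : ℂ)⁻¹ := by norm_num
    rw [h2]
    exact_mod_cast Complex.cpow_nat_inv_pow z two_ne_zero
  set τ : ℝ := |s.im| with hτdef
  have hτ0 : 0 ≤ τ := abs_nonneg _
  have hszero : z = 0 → s = 0 := by
    intro h
    rw [hs, h]
    exact Complex.zero_cpow (by norm_num)
  have hs_ne : z ≠ 0 → s ≠ 0 := by
    intro hz h
    apply hz
    rw [← hs2, h]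
    ring
  set cz : ℝ → ℂ := fun y => Complex.cos (s * y) with hczdef
  set σz : ℝ → ℂ := fun y => if z = 0 then (y:ℂ) else Complex.sin (s * y) / s with hσzdef
  have him : ∀ y : ℝ, (s * (y:ℂ)).im = s.im * y := by
    intro y
    simp [Complex.mul_im]
  have hcb : ∀ y : ℝ, 0 ≤ y → ‖cz y‖ ≤ Real.exp (τ * y) := by
    intro y hy
    refine le_trans (TailAux.norm_cos_le _) ?_
    rw [him y, abs_mul, abs_of_nonneg hy]
  have hsinb : ∀ y : ℝ, 0 ≤ y → ‖Complex.sin (s * y)‖ ≤ Real.exp (τ * y) := by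
    intro y hy
    refine le_trans (TailAux.norm_sin_le _) ?_
    rw [him y, abs_mul, abs_of_nonneg hy]
  have hsnorm : ‖s‖ = Real.sqrt ‖z‖ := by
    rw [← hs2, norm_pow]
    exact (Real.sqrt_sq (norm_nonneg s)).symm
  have hc0 : cz 0 = 1 := by
    rw [hczdef]
    simp
  have hσ0 : σz 0 = 0 := by
    rw [hσzdef]
    split_ifs <;> simp
  have hdc : ∀ y : ℝ, HasDerivAt cz (-(z * σz y)) y := by
    intro y
    by_cases hz : z = 0
    · have hs0 := hszero hz
      have h1 : cz = fun _ : ℝ => (1:ℂ) := by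
        funext w
        rw [hczdef]
        simp [hs0]
      rw [h1]
      simp only [hz, zero_mul, neg_zero]
      exact hasDerivAt_const y 1
    · have h1 : HasDerivAt (fun w : ℂ => Complex.cos (s * w)) (-Complex.sin (s * y) * s) (y:ℂ) := by
        simpa [Function.comp_def] using (Complex.hasDerivAt_cos (s * (y:ℂ))).comp (y:ℂ)
          ((hasDerivAt_id ((y:ℝ):ℂ)).const_mul s)
      have h2 := h1.comp_ofReal
      rw [hczdef]
      convert h2 using 1
      rw [hσzdef]
      simp only [if_neg hz]
      rw [← hs2]
      field_simp [hs_ne hz]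
  have hdσ : ∀ y : ℝ, HasDerivAt σz (cz y) y := by
    intro y
    by_cases hz : z = 0
    · have hs0 := hszero hz
      have h1 : σz = fun w : ℝ => (w:ℂ) := by
        funext w
        rw [hσzdef]
        simp [hz]
      have h2 : cz y = 1 := by rw [hczdef]; simp [hs0]
      rw [h1, h2]
      simpa using (hasDerivAt_id ((y:ℝ):ℂ)).comp_ofReal
    · have h1 : HasDerivAt (fun w : ℂ => Complex.sin (s * w)) (Complex.cos (s * y) * s) (y:ℂ) := by
        simpa [Function.comp_def] using (Complex.hasDerivAt_sin (s * (y:ℂ))).comp (y:ℂ)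
          ((hasDerivAt_id ((y:ℝ):ℂ)).const_mul s)
      have h2 := (h1.comp_ofReal).div_const s
      have h3 : σz = fun w : ℝ => Complex.sin (s * w) / s := by
        funext w
        rw [hσzdef]
        simp [hz]
      rw [h3, hczdef]
      refine h2.congr_deriv ?_
      field_simp [hs_ne hz]
  have hPyth : ∀ y : ℝ, cz y ^ 2 + z * σz y ^ 2 = 1 := by
    intro y
    by_cases hz : z = 0
    · rw [hczdef, hσzdef]
      simp [hszero hz, hz]
    · rw [hczdef, hσzdef]
      simp only [if_neg hz]
      have h1 := Complex.sin_sq_add_cos_sq (s * y)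
      have hsne := hs_ne hz
      field_simp
      rw [← hs2]
      linear_combination (s:ℂ)^2 * h1
  have hk1 : ∀ t x : ℝ, 0 ≤ t → t ≤ x →
      ‖σz x * cz t - cz x * σz t‖ ≤ (x - t) * Real.exp (τ * (x - t)) := by
    intro t x ht htx
    by_cases hz : z = 0
    · have hs0 := hszero hz
      rw [hczdef, hσzdef]
      simp only [if_pos hz, hs0, zero_mul, Complex.cos_zero, mul_one, one_mul]
      rw [← Complex.ofReal_sub, Complex.norm_real, Real.norm_eq_abs,
        abs_of_nonneg (by linarith)]
      nlinarith [Real.one_le_exp (mul_nonneg hτ0 (by linarith : (0:ℝ) ≤ x - t))]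
    · have hsne := hs_ne hz
      have hkey : σz x * cz t - cz x * σz t = Complex.sin (s * ((x - t : ℝ) : ℂ)) / s := by
        rw [hczdef, hσzdef]
        simp only [if_neg hz]
        have harg : s * ((x - t : ℝ) : ℂ) = s * (x:ℂ) - s * (t:ℂ) := by push_cast; ring
        have hsub := Complex.sin_sub (s * (x:ℂ)) (s * (t:ℂ))
        rw [harg, hsub]
        field_simp
      rw [hkey, norm_div]
      have h1 := TailAux.norm_sin_le' (s * ((x - t : ℝ) : ℂ))
      have h2 : ‖s * ((x - t : ℝ) : ℂ)‖ = ‖s‖ * (x - t) := by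
        rw [norm_mul, Complex.norm_real, Real.norm_eq_abs, abs_of_nonneg (by linarith)]
      have h3 : |(s * ((x - t : ℝ) : ℂ)).im| = τ * (x - t) := by
        rw [him, abs_mul, abs_of_nonneg (by linarith : (0:ℝ) ≤ x - t)]
      rw [h2, h3] at h1
      rw [div_le_iff₀ (norm_pos_iff.2 hsne)]
      calc ‖Complex.sin (s * ((x - t : ℝ) : ℂ))‖ ≤ ‖s‖ * (x - t) * Real.exp (τ * (x - t)) := h1
        _ = (x - t) * Real.exp (τ * (x - t)) * ‖s‖ := by ring
  have hk2 : ∀ t x : ℝ, 0 ≤ t → t ≤ x →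
      ‖cz x * cz t + z * (σz x * σz t)‖ ≤ Real.exp (τ * (x - t)) := by
    intro t x ht htx
    by_cases hz : z = 0
    · rw [hczdef]
      simp only [hszero hz, hz, zero_mul, Complex.cos_zero, one_mul, mul_one, add_zero]
      simpa using Real.one_le_exp (mul_nonneg hτ0 (by linarith : (0:ℝ) ≤ x - t))
    · have hsne := hs_ne hz
      have hkey : cz x * cz t + z * (σz x * σz t) = Complex.cos (s * ((x - t : ℝ) : ℂ)) := by
        rw [hczdef, hσzdef]
        simp only [if_neg hz]
        have harg : s * ((x - t : ℝ) : ℂ) = s * (x:ℂ) - s * (t:ℂ) := by push_cast; ring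
        have hcos := Complex.cos_sub (s * (x:ℂ)) (s * (t:ℂ))
        rw [harg, hcos, ← hs2]
        field_simp
      rw [hkey]
      refine le_trans (TailAux.norm_cos_le _) ?_
      rw [him, abs_mul, abs_of_nonneg (by linarith : (0:ℝ) ≤ x - t)]
  have hzσ : ∀ y : ℝ, 0 ≤ y → ‖z * σz y‖ ≤ Real.sqrt ‖z‖ * Real.exp (τ * y) := by
    intro y hy
    by_cases hz : z = 0
    · rw [hz]
      simp only [zero_mul, norm_zero]
      positivity
    · have hsne := hs_ne hz
      have hkey : z * σz y = s * Complex.sin (s * y) := by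
        rw [hσzdef]
        simp only [if_neg hz]
        rw [← hs2]
        field_simp
      rw [hkey, norm_mul, hsnorm]
      exact mul_le_mul_of_nonneg_left (hsinb y hy) (Real.sqrt_nonneg _)
  have hσcont : Continuous σz := by
    rw [hσzdef]
    by_cases hz : z = 0
    · simp only [if_pos hz]
      exact Complex.continuous_ofReal
    · simp only [if_neg hz]
      fun_prop
  have hccont : Continuous cz := by
    rw [hczdef]
    fun_prop
  set u : ℝ → ℂ := ξ z with hu
  set u' : ℝ → ℂ := ξ' z with hu'
  have hud : ∀ x ∈ Icc (0:ℝ) π, HasDerivWithinAt u (u' x) (Icc 0 π) x := hξd z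
  have hud' : ∀ x ∈ Icc (0:ℝ) π,
      HasDerivWithinAt u' (((V x : ℂ) - z) * u x) (Icc 0 π) x := hξd' z
  have huc : ContinuousOn u (Icc 0 π) := fun x hx => (hud x hx).continuousWithinAt
  have hu'c : ContinuousOn u' (Icc 0 π) := fun x hx => (hud' x hx).continuousWithinAt
  set W : ℝ → ℂ := fun t => (V t : ℂ) * u t with hWdef
  have hWc : ContinuousOn W (Icc 0 π) :=
    (Complex.continuous_ofReal.comp_continuousOn hVc).mul huc
  have hWb : ∀ t ∈ Icc (0:ℝ) π, ‖W t‖ ≤ M * ‖u t‖ := by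
    intro t ht
    rw [hWdef]
    simp only []
    rw [norm_mul, Complex.norm_real, Real.norm_eq_abs]
    exact mul_le_mul_of_nonneg_right (hM t ht) (norm_nonneg _)
  set P : ℝ → ℂ := fun x => ∫ t in (0:ℝ)..x, σz t * W t with hPdef
  set Q : ℝ → ℂ := fun x => ∫ t in (0:ℝ)..x, cz t * W t with hQdef
  have hσWc : ContinuousOn (fun t => σz t * W t) (Icc 0 π) := hσcont.continuousOn.mul hWc
  have hcWc : ContinuousOn (fun t => cz t * W t) (Icc 0 π) := hccont.continuousOn.mul hWc
  have hPd : ∀ x ∈ Icc (0:ℝ) π, HasDerivWithinAt P (σz x * W x) (Icc 0 π) x :=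
    fun x hx => TailAux.primitive_hasDerivWithinAt hσWc hx
  have hQd : ∀ x ∈ Icc (0:ℝ) π, HasDerivWithinAt Q (cz x * W x) (Icc 0 π) x :=
    fun x hx => TailAux.primitive_hasDerivWithinAt hcWc hx
  -- representation formula
  have hrep : ∀ x ∈ Icc (0:ℝ) π, u x = cz x * (1 - P x) + σz x * Q x := by
    intro x hx
    have hαd : ∀ y ∈ Icc (0:ℝ) π, HasDerivWithinAt (fun w => cz w * u w - σz w * u' w)
        (-(σz y * W y)) (Icc 0 π) y := by
      intro y hy
      have h1 := ((hdc y).hasDerivWithinAt.mul (hud y hy)).sub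
        ((hdσ y).hasDerivWithinAt.mul (hud' y hy))
      refine h1.congr_deriv ?_
      rw [hWdef]
      simp only []
      ring
    have hβd : ∀ y ∈ Icc (0:ℝ) π, HasDerivWithinAt (fun w => cz w * u' w + z * (σz w * u w))
        (cz y * W y) (Icc 0 π) y := by
      intro y hy
      have h1 := ((hdc y).hasDerivWithinAt.mul (hud' y hy)).add
        (((hdσ y).hasDerivWithinAt.mul (hud y hy)).const_mul z)
      refine h1.congr_deriv ?_
      rw [hWdef]
      simp only []
      ring
    have hFTCα : ∫ t in (0:ℝ)..x, -(σz t * W t) =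
        (cz x * u x - σz x * u' x) - (cz 0 * u 0 - σz 0 * u' 0) := by
      apply intervalIntegral.integral_eq_sub_of_hasDeriv_right_of_le hx.1
      · exact ContinuousOn.mono (fun y hy => (hαd y hy).continuousWithinAt)
          (Icc_subset_Icc le_rfl hx.2)
      · intro t ht
        have ht' : t ∈ Icc (0:ℝ) π := ⟨ht.1.le, le_trans ht.2.le hx.2⟩
        exact ((hαd t ht').hasDerivAt
          (Icc_mem_nhds ht.1 (lt_of_lt_of_le ht.2 hx.2))).hasDerivWithinAt
      · apply ContinuousOn.intervalIntegrable
        rw [uIcc_of_le hx.1]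
        exact (hσWc.mono (Icc_subset_Icc le_rfl hx.2)).neg
    have hFTCβ : ∫ t in (0:ℝ)..x, cz t * W t =
        (cz x * u' x + z * (σz x * u x)) - (cz 0 * u' 0 + z * (σz 0 * u 0)) := by
      apply intervalIntegral.integral_eq_sub_of_hasDeriv_right_of_le hx.1
      · exact ContinuousOn.mono (fun y hy => (hβd y hy).continuousWithinAt)
          (Icc_subset_Icc le_rfl hx.2)
      · intro t ht
        have ht' : t ∈ Icc (0:ℝ) π := ⟨ht.1.le, le_trans ht.2.le hx.2⟩
        exact ((hβd t ht').hasDerivAt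
          (Icc_mem_nhds ht.1 (lt_of_lt_of_le ht.2 hx.2))).hasDerivWithinAt
      · apply ContinuousOn.intervalIntegrable
        rw [uIcc_of_le hx.1]
        exact hcWc.mono (Icc_subset_Icc le_rfl hx.2)
    have hu0 : u 0 = 1 := hξ0 z
    have hu'0 : u' 0 = 0 := hξ'0 z
    rw [hσ0, hc0, hu0, hu'0] at hFTCα hFTCβ
    rw [intervalIntegral.integral_neg] at hFTCα
    have hαx : cz x * u x - σz x * u' x = 1 - P x := by
      rw [hPdef]
      simp only []
      linear_combination -hFTCα
    have hβx : cz x * u' x + z * (σz x * u x) = Q x := by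
      rw [hQdef]
      simp only []
      linear_combination -hFTCβ
    have hp := hPyth x
    have hcomb : cz x * (cz x * u x - σz x * u' x) + σz x * (cz x * u' x + z * (σz x * u x))
        = u x := by
      linear_combination (u x) * hp
    rw [hαx, hβx] at hcomb
    exact hcomb.symm
  -- F as an integral
  have hFrep : ∀ x ∈ Icc (0:ℝ) π,
      u x - cz x = ∫ t in (0:ℝ)..x, (σz x * cz t - cz x * σz t) * W t := by
    intro x hx
    have hi1 : IntervalIntegrable (fun t => σz x * (cz t * W t)) volume 0 x := by
      apply ContinuousOn.intervalIntegrable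
      rw [uIcc_of_le hx.1]
      exact continuousOn_const.mul (hcWc.mono (Icc_subset_Icc le_rfl hx.2))
    have hi2 : IntervalIntegrable (fun t => cz x * (σz t * W t)) volume 0 x := by
      apply ContinuousOn.intervalIntegrable
      rw [uIcc_of_le hx.1]
      exact continuousOn_const.mul (hσWc.mono (Icc_subset_Icc le_rfl hx.2))
    have h1 : ∫ t in (0:ℝ)..x, (σz x * cz t - cz x * σz t) * W t
        = (∫ t in (0:ℝ)..x, σz x * (cz t * W t)) - ∫ t in (0:ℝ)..x, cz x * (σz t * W t) := by
      rw [← intervalIntegral.integral_sub hi1 hi2]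
      apply intervalIntegral.integral_congr
      intro t _
      ring
    rw [h1, intervalIntegral.integral_const_mul, intervalIntegral.integral_const_mul]
    have h2 : σz x * ∫ t in (0:ℝ)..x, cz t * W t = σz x * Q x := by rw [hQdef]
    have h3 : cz x * ∫ t in (0:ℝ)..x, σz t * W t = cz x * P x := by rw [hPdef]
    rw [h2, h3]
    linear_combination hrep x hx
  -- bound on u via Grönwall
  set m : ℝ → ℝ := fun t => ‖u t‖ * Real.exp (-(τ * t)) with hmdef
  have hmc : ContinuousOn m (Icc 0 π) := by
    apply ContinuousOn.mul
    · exact continuous_norm.comp_continuousOn huc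
    · fun_prop
  have hm0 : ∀ t : ℝ, 0 ≤ m t := fun t => mul_nonneg (norm_nonneg _) (Real.exp_pos _).le
  have hmeq : ∀ t : ℝ, ‖u t‖ = m t * Real.exp (τ * t) := by
    intro t
    rw [hmdef]
    simp only []
    rw [mul_assoc, ← Real.exp_add]
    simp
  have hub : ∀ x ∈ Icc (0:ℝ) π, ‖u x‖ ≤ C₀ * Real.exp (τ * x) := by
    have hineq : ∀ x ∈ Icc (0:ℝ) π, m x ≤ 1 + K * ∫ t in (0:ℝ)..x, m t := by
      intro x hx
      have hInn : 0 ≤ ∫ t in (0:ℝ)..x, m t :=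
        intervalIntegral.integral_nonneg hx.1 (fun t _ => hm0 t)
      have hkerc : ContinuousOn (fun t => (σz x * cz t - cz x * σz t) * W t) (Icc 0 x) :=
        (((continuous_const.mul hccont).sub
          (continuous_const.mul hσcont)).continuousOn).mul
          (hWc.mono (Icc_subset_Icc le_rfl hx.2))
      have hnorm : ‖u x - cz x‖ ≤ π * M * Real.exp (τ * x) * ∫ t in (0:ℝ)..x, m t := by
        rw [hFrep x hx]
        refine le_trans (intervalIntegral.norm_integral_le_integral_norm hx.1) ?_
        have h3 : ∫ t in (0:ℝ)..x, ‖(σz x * cz t - cz x * σz t) * W t‖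
            ≤ ∫ t in (0:ℝ)..x, (π * M * Real.exp (τ * x)) * m t := by
          apply intervalIntegral.integral_mono_on hx.1
          · apply ContinuousOn.intervalIntegrable
            rw [uIcc_of_le hx.1]
            exact hkerc.norm
          · apply ContinuousOn.intervalIntegrable
            rw [uIcc_of_le hx.1]
            exact continuousOn_const.mul (hmc.mono (Icc_subset_Icc le_rfl hx.2))
          · intro t ht
            have ht' : t ∈ Icc (0:ℝ) π := ⟨ht.1, le_trans ht.2 hx.2⟩
            rw [norm_mul]
            calc ‖σz x * cz t - cz x * σz t‖ * ‖W t‖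
                ≤ ((x - t) * Real.exp (τ * (x - t))) * (M * ‖u t‖) :=
                  mul_le_mul (hk1 t x ht.1 ht.2) (hWb t ht') (norm_nonneg _)
                    (mul_nonneg (by linarith [ht.1, ht.2] : (0:ℝ) ≤ x - t)
                      (Real.exp_pos _).le)
              _ ≤ (π * Real.exp (τ * (x - t))) * (M * ‖u t‖) := by
                  have hxt : x - t ≤ π := by
                    have h7 := hx.2; have h8 := ht.1; linarith
                  have h5 : (0:ℝ) ≤ Real.exp (τ * (x - t)) := (Real.exp_pos _).le
                  have h6 : (0:ℝ) ≤ M * ‖u t‖ := mul_nonneg hM0.le (norm_nonneg _)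
                  exact mul_le_mul_of_nonneg_right
                    (mul_le_mul_of_nonneg_right hxt h5) h6
              _ = π * M * Real.exp (τ * x) * m t := by
                  rw [hmdef]
                  simp only []
                  rw [show τ * (x - t) = τ * x + -(τ * t) by ring, Real.exp_add]
                  ring
        refine le_trans h3 ?_
        rw [intervalIntegral.integral_const_mul]
      have hux : ‖u x‖ ≤ Real.exp (τ * x) + π * M * Real.exp (τ * x) * ∫ t in (0:ℝ)..x, m t := by
        calc ‖u x‖ = ‖cz x + (u x - cz x)‖ := by ring_nf
          _ ≤ ‖cz x‖ + ‖u x - cz x‖ := norm_add_le _ _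
          _ ≤ Real.exp (τ * x) + π * M * Real.exp (τ * x) * ∫ t in (0:ℝ)..x, m t :=
              add_le_add (hcb x hx.1) hnorm
      have hE : Real.exp (τ * x) * Real.exp (-(τ * x)) = 1 := by
        rw [← Real.exp_add]
        simp
      have step : m x ≤ 1 + π * M * ∫ t in (0:ℝ)..x, m t := by
        calc m x = ‖u x‖ * Real.exp (-(τ * x)) := rfl
          _ ≤ (Real.exp (τ * x) + π * M * Real.exp (τ * x) * ∫ t in (0:ℝ)..x, m t)
              * Real.exp (-(τ * x)) :=
              mul_le_mul_of_nonneg_right hux (Real.exp_pos _).le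
          _ = 1 + π * M * ∫ t in (0:ℝ)..x, m t := by
              linear_combination (1 + π * M * ∫ t in (0:ℝ)..x, m t) * hE
      have hKge : π * M ≤ K := by rw [hKdef]; linarith
      calc m x ≤ 1 + π * M * ∫ t in (0:ℝ)..x, m t := step
        _ ≤ 1 + K * ∫ t in (0:ℝ)..x, m t := by nlinarith
    intro x hx
    have h1 := TailAux.gronwall_aux hK hmc (fun t _ => hm0 t) hineq x hx
    have h2 : m x ≤ C₀ := by
      refine le_trans h1 ?_
      rw [hC₀def]
      apply Real.exp_le_exp.2
      exact mul_le_mul_of_nonneg_left hx.2 hK.le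
    rw [hmeq x]
    exact mul_le_mul_of_nonneg_right h2 (Real.exp_pos _).le
  -- bound on F = u - cz
  have hFb : ∀ x ∈ Icc (0:ℝ) π, ‖u x - cz x‖ ≤ CF * Real.exp (τ * x) := by
    intro x hx
    rw [hFrep x hx]
    have h1 := intervalIntegral.norm_integral_le_of_norm_le_const
      (C := π * M * C₀ * Real.exp (τ * x))
      (f := fun t => (σz x * cz t - cz x * σz t) * W t) (a := 0) (b := x) ?_
    · have h2 : |x - 0| = x := by rw [sub_zero, abs_of_nonneg hx.1]
      rw [h2] at h1
      refine le_trans h1 ?_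
      have h3 : (0:ℝ) ≤ π * M * C₀ * Real.exp (τ * x) := by positivity
      calc π * M * C₀ * Real.exp (τ * x) * x ≤ π * M * C₀ * Real.exp (τ * x) * π :=
            mul_le_mul_of_nonneg_left hx.2 h3
        _ = CF * Real.exp (τ * x) := by rw [hCFdef]; ring
    · intro t ht
      rw [uIoc_of_le hx.1] at ht
      have ht' : t ∈ Icc (0:ℝ) π := ⟨ht.1.le, le_trans ht.2 hx.2⟩
      rw [norm_mul]
      calc ‖σz x * cz t - cz x * σz t‖ * ‖W t‖
          ≤ ((x - t) * Real.exp (τ * (x - t))) * (M * (C₀ * Real.exp (τ * t))) := by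
            apply mul_le_mul (hk1 t x ht.1.le ht.2) _ (norm_nonneg _)
              (mul_nonneg (by linarith [ht.1.le, ht.2] : (0:ℝ) ≤ x - t)
                (Real.exp_pos _).le)
            exact le_trans (hWb t ht') (mul_le_mul_of_nonneg_left (hub t ht') hM0.le)
        _ ≤ (π * Real.exp (τ * (x - t))) * (M * (C₀ * Real.exp (τ * t))) := by
            have hxt : x - t ≤ π := by
              have h7 := hx.2; have h8 := ht.1.le; linarith
            have h5 : (0:ℝ) ≤ Real.exp (τ * (x - t)) := (Real.exp_pos _).le
            have h6 : (0:ℝ) ≤ M * (C₀ * Real.exp (τ * t)) :=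
              mul_nonneg hM0.le (mul_nonneg hC₀.le (Real.exp_pos _).le)
            exact mul_le_mul_of_nonneg_right
              (mul_le_mul_of_nonneg_right hxt h5) h6
        _ = π * M * C₀ * Real.exp (τ * x) := by
            rw [show τ * x = τ * (x - t) + τ * t by ring, Real.exp_add]
            ring
  -- derivative of F
  set DF : ℝ → ℂ := fun x => u' x + z * σz x with hDFdef
  have hDFc : ContinuousOn DF (Icc 0 π) :=
    hu'c.add (continuous_const.mul hσcont).continuousOn
  have hFd : ∀ x ∈ Ioo (0:ℝ) π, HasDerivAt (fun y => u y - cz y) (DF x) x := by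
    intro x hx
    have h1 := ((hud x ⟨hx.1.le, hx.2.le⟩).hasDerivAt (Icc_mem_nhds hx.1 hx.2)).sub (hdc x)
    refine h1.congr_deriv ?_
    rw [hDFdef]
    simp only []
    ring
  have hDFb : ∀ x ∈ Ioo (0:ℝ) π, ‖DF x‖ ≤ CF' * Real.exp (τ * x) := by
    intro x hx
    have hx' : x ∈ Icc (0:ℝ) π := ⟨hx.1.le, hx.2.le⟩
    have hPx : HasDerivAt P (σz x * W x) x := (hPd x hx').hasDerivAt (Icc_mem_nhds hx.1 hx.2)
    have hQx : HasDerivAt Q (cz x * W x) x := (hQd x hx').hasDerivAt (Icc_mem_nhds hx.1 hx.2)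
    have hRd : HasDerivAt (fun y => cz y * (1 - P y) + σz y * Q y)
        (-(z * σz x) * (1 - P x) + cz x * (0 - σz x * W x)
          + (cz x * Q x + σz x * (cz x * W x))) x :=
      ((hdc x).mul ((hasDerivAt_const x (1:ℂ)).sub hPx)).add ((hdσ x).mul hQx)
    have hequ : HasDerivAt u (-(z * σz x) * (1 - P x) + cz x * (0 - σz x * W x)
          + (cz x * Q x + σz x * (cz x * W x))) x := by
      apply hRd.congr_of_eventuallyEq
      exact Filter.eventuallyEq_of_mem (Icc_mem_nhds hx.1 hx.2) (fun y hy => hrep y hy)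
    have hu'x : HasDerivAt u (u' x) x :=
      (hud x hx').hasDerivAt (Icc_mem_nhds hx.1 hx.2)
    have hident := hu'x.unique hequ
    have hDFx : DF x = z * (σz x * P x) + cz x * Q x := by
      rw [hDFdef]
      simp only []
      rw [hident]
      ring
    have hi1 : IntervalIntegrable (fun t => cz x * (cz t * W t)) volume 0 x := by
      apply ContinuousOn.intervalIntegrable
      rw [uIcc_of_le hx.1.le]
      exact continuousOn_const.mul (hcWc.mono (Icc_subset_Icc le_rfl hx.2.le))
    have hi2 : IntervalIntegrable (fun t => z * σz x * (σz t * W t)) volume 0 x := by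
      apply ContinuousOn.intervalIntegrable
      rw [uIcc_of_le hx.1.le]
      exact continuousOn_const.mul (hσWc.mono (Icc_subset_Icc le_rfl hx.2.le))
    have hDFint : DF x = ∫ t in (0:ℝ)..x, (cz x * cz t + z * (σz x * σz t)) * W t := by
      have h1 : ∫ t in (0:ℝ)..x, (cz x * cz t + z * (σz x * σz t)) * W t
          = (∫ t in (0:ℝ)..x, cz x * (cz t * W t))
            + ∫ t in (0:ℝ)..x, z * σz x * (σz t * W t) := by
        rw [← intervalIntegral.integral_add hi1 hi2]
        apply intervalIntegral.integral_congr
        intro t _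
        ring
      rw [h1, intervalIntegral.integral_const_mul, intervalIntegral.integral_const_mul]
      have h2 : (∫ t in (0:ℝ)..x, cz t * W t) = Q x := by rw [hQdef]
      have h3 : (∫ t in (0:ℝ)..x, σz t * W t) = P x := by rw [hPdef]
      rw [h2, h3, hDFx]
      ring
    rw [hDFint]
    have h1 := intervalIntegral.norm_integral_le_of_norm_le_const
      (C := M * C₀ * Real.exp (τ * x))
      (f := fun t => (cz x * cz t + z * (σz x * σz t)) * W t) (a := 0) (b := x) ?_
    · have h2 : |x - 0| = x := by rw [sub_zero, abs_of_nonneg hx.1.le]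
      rw [h2] at h1
      refine le_trans h1 ?_
      have h3 : (0:ℝ) ≤ M * C₀ * Real.exp (τ * x) := by positivity
      calc M * C₀ * Real.exp (τ * x) * x ≤ M * C₀ * Real.exp (τ * x) * π :=
            mul_le_mul_of_nonneg_left hx.2.le h3
        _ = CF' * Real.exp (τ * x) := by rw [hCF'def]; ring
    · intro t ht
      rw [uIoc_of_le hx.1.le] at ht
      have ht' : t ∈ Icc (0:ℝ) π := ⟨ht.1.le, le_trans ht.2 hx.2.le⟩
      rw [norm_mul]
      calc ‖cz x * cz t + z * (σz x * σz t)‖ * ‖W t‖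
          ≤ Real.exp (τ * (x - t)) * (M * (C₀ * Real.exp (τ * t))) := by
            apply mul_le_mul (hk2 t x ht.1.le ht.2) _ (norm_nonneg _) (Real.exp_pos _).le
            exact le_trans (hWb t ht') (mul_le_mul_of_nonneg_left (hub t ht') hM0.le)
        _ = M * C₀ * Real.exp (τ * x) := by
            rw [show τ * x = τ * (x - t) + τ * t by ring, Real.exp_add]
            ring
  -- final estimates
  set r : ℝ := Real.sqrt ‖z‖ with hrdef
  have hr0 : 0 ≤ r := Real.sqrt_nonneg _
  have hden : 0 < 1 + π * r := by nlinarith [mul_nonneg h0π hr0]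
  set eπ : ℝ := Real.exp (π * τ) with heπdef
  have he0 : 0 < eπ := Real.exp_pos _
  have hexp : ∀ x : ℝ, x ≤ π → Real.exp (τ * x) ≤ eπ := by
    intro x hx
    rw [heπdef]
    apply Real.exp_le_exp.2
    rw [mul_comm π τ]
    exact mul_le_mul_of_nonneg_left hx hτ0
  have hzr : ‖z‖ = r ^ 2 := (Real.sq_sqrt (norm_nonneg z)).symm
  have hsq : r ≤ (1 + π) * (1 + ‖z‖ / (1 + π * r)) := by
    rw [hzr]
    have hexpand : (1 + π) * (1 + r^2 / (1 + π * r))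
        = ((1 + π) * ((1 + π * r) + r^2)) / (1 + π * r) := by
      field_simp
    rw [hexpand, le_div_iff₀ hden]
    nlinarith [sq_nonneg (r - 1), mul_nonneg (mul_nonneg h0π h0π) hr0,
      mul_nonneg h0π hr0, mul_nonneg h0π (sq_nonneg r)]
  have hofRgc : ContinuousOn (fun x : ℝ => ((gR x : ℝ) : ℂ)) (Icc a π) :=
    Complex.continuous_ofReal.comp_continuousOn hgc
  have hofRg'c : ContinuousOn (fun x : ℝ => ((g' x : ℝ) : ℂ)) (Icc a π) :=
    Complex.continuous_ofReal.comp_continuousOn hg'c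
  constructor
  · -- part 1
    set h₁ : ℝ → ℂ := fun x => cz x * ((gR x : ℝ) : ℂ) with hh₁
    set h₁' : ℝ → ℂ := fun x => -(z * σz x) * ((gR x : ℝ) : ℂ) + cz x * ((g' x : ℝ) : ℂ)
      with hh₁'
    have key1 := TailAux.ibp_aux haπ h₁ h₁' (G₀ * eπ) ((r * G₀ + G₁) * eπ)
      (hccont.continuousOn.mul hofRgc)
      (fun x hx => (hdc x).mul ((hgd x hx).ofReal_comp))
      (((continuous_const.mul hσcont).neg.continuousOn.mul hofRgc).add
        (hccont.continuousOn.mul hofRg'c))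
      (by rw [hh₁]; simp [hgπ])
      (by
        rw [hh₁]
        simp only []
        rw [norm_mul, Complex.norm_real, Real.norm_eq_abs]
        calc ‖cz a‖ * |gR a| ≤ eπ * G₀ :=
              mul_le_mul (le_trans (hcb a ha0.le) (hexp a haπ.le))
                (hgb a ⟨le_rfl, haπ.le⟩) (abs_nonneg _) he0.le
          _ = G₀ * eπ := by ring)
      (by
        intro x hx
        have hxI : x ∈ Icc a π := ⟨hx.1.le, hx.2⟩
        have hx0 : (0:ℝ) ≤ x := le_trans ha0.le hx.1.le
        rw [hh₁']
        simp only []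
        refine le_trans (norm_add_le _ _) ?_
        rw [norm_mul, norm_mul, norm_neg, Complex.norm_real, Complex.norm_real,
          Real.norm_eq_abs, Real.norm_eq_abs]
        have b1 : ‖z * σz x‖ * |gR x| ≤ (r * eπ) * G₀ := by
          apply mul_le_mul _ (hgb x hxI) (abs_nonneg _) (by positivity)
          refine le_trans (hzσ x hx0) ?_
          exact mul_le_mul_of_nonneg_left (hexp x hx.2) hr0
        have b2 : ‖cz x‖ * |g' x| ≤ eπ * G₁ := by
          apply mul_le_mul (le_trans (hcb x hx0) (hexp x hx.2)) (hg'b x hxI)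
            (abs_nonneg _) he0.le
        calc ‖z * σz x‖ * |gR x| + ‖cz x‖ * |g' x| ≤ (r * eπ) * G₀ + eπ * G₁ :=
              add_le_add b1 b2
          _ = (r * G₀ + G₁) * eπ := by ring)
      n hn
    have hcong1 : (∫ x in a..π, Complex.cos (s * ↑x) * (↑((π - x) / (π - a)) : ℂ) *
          (↑(1/2 * (∫ y in (0:ℝ)..x, V y) - x / (2 * π) * IV) : ℂ) *
          Complex.sin ((n : ℂ) * ↑x))
        = ∫ x in a..π, h₁ x * Complex.sin ((n : ℂ) * ↑x) := by
      apply intervalIntegral.integral_congr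
      intro x _
      simp only [hh₁, hgRdef, hρf]
      push_cast
      ring
    rw [hcong1]
    refine le_trans key1 ?_
    set Qz : ℝ := ‖z‖ / (1 + π * r) with hQzdef
    have hQz0 : 0 ≤ Qz := div_nonneg (norm_nonneg z) hden.le
    have hnum : G₀ * eπ + (π - a) * ((r * G₀ + G₁) * eπ) ≤ C * (1 + Qz) * eπ := by
      have t1 : (π - a) * G₀ * r ≤ (π - a) * G₀ * ((1 + π) * (1 + Qz)) :=
        mul_le_mul_of_nonneg_left hsq (mul_nonneg hπa.le hG₀.le)
      have t2 : G₀ + (π - a) * G₁ ≤ (G₀ + (π - a) * G₁) * (1 + Qz) := by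
        apply le_mul_of_one_le_right _ (by linarith)
        have := mul_nonneg hπa.le hG₁.le
        linarith
      have t3 : 0 ≤ (CF * G₀ + (π - a) * (CF' * G₀ + CF * G₁) + 1) * (1 + Qz) := by
        have n1 : 0 ≤ CF * G₀ := mul_nonneg hCF.le hG₀.le
        have n2 : 0 ≤ (π - a) * (CF' * G₀ + CF * G₁) := by
          apply mul_nonneg hπa.le
          have := mul_nonneg hCF'.le hG₀.le
          have := mul_nonneg hCF.le hG₁.le
          linarith
        apply mul_nonneg (by linarith) (by linarith)
      have hcore : G₀ + (π - a) * (r * G₀ + G₁) ≤ C * (1 + Qz) := by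
        rw [hCdef]
        nlinarith [t1, t2, t3]
      calc G₀ * eπ + (π - a) * ((r * G₀ + G₁) * eπ)
          = (G₀ + (π - a) * (r * G₀ + G₁)) * eπ := by ring
        _ ≤ (C * (1 + Qz)) * eπ := mul_le_mul_of_nonneg_right hcore he0.le
        _ = C * (1 + Qz) * eπ := by ring
    calc (G₀ * eπ + (π - a) * ((r * G₀ + G₁) * eπ)) / n ≤ (C * (1 + Qz) * eπ) / n :=
          (div_le_div_iff_of_pos_right hnR).2 hnum
      _ = C / n * eπ * (1 + Qz) := by ring
  · -- part 2
    set h₂ : ℝ → ℂ := fun x => (u x - cz x) * ((gR x : ℝ) : ℂ) with hh₂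
    set h₂' : ℝ → ℂ := fun x => DF x * ((gR x : ℝ) : ℂ) + (u x - cz x) * ((g' x : ℝ) : ℂ)
      with hh₂'
    have hFcont : ContinuousOn (fun x => u x - cz x) (Icc a π) :=
      (huc.mono hIccsub).sub hccont.continuousOn
    have key2 := TailAux.ibp_aux haπ h₂ h₂' (CF * G₀ * eπ) ((CF' * G₀ + CF * G₁) * eπ)
      (hFcont.mul hofRgc)
      (fun x hx => (hFd x ⟨lt_trans ha0 hx.1, hx.2⟩).mul ((hgd x hx).ofReal_comp))
      (((hDFc.mono hIccsub).mul hofRgc).add (hFcont.mul hofRg'c))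
      (by rw [hh₂]; simp [hgπ])
      (by
        rw [hh₂]
        simp only []
        rw [norm_mul, Complex.norm_real, Real.norm_eq_abs]
        have haI : a ∈ Icc (0:ℝ) π := ⟨ha0.le, haπ.le⟩
        calc ‖u a - cz a‖ * |gR a| ≤ (CF * eπ) * G₀ := by
              apply mul_le_mul _ (hgb a ⟨le_rfl, haπ.le⟩) (abs_nonneg _)
                (mul_nonneg hCF.le he0.le)
              exact le_trans (hFb a haI)
                (mul_le_mul_of_nonneg_left (hexp a haπ.le) hCF.le)
          _ = CF * G₀ * eπ := by ring)
      (by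
        intro x hx
        have hxI : x ∈ Icc a π := ⟨hx.1.le, hx.2⟩
        have hx0 : (0:ℝ) ≤ x := le_trans ha0.le hx.1.le
        have hxIcc : x ∈ Icc (0:ℝ) π := ⟨hx0, hx.2⟩
        rw [hh₂']
        simp only []
        refine le_trans (norm_add_le _ _) ?_
        rw [norm_mul, norm_mul, Complex.norm_real, Complex.norm_real,
          Real.norm_eq_abs, Real.norm_eq_abs]
        have b2 : ‖u x - cz x‖ * |g' x| ≤ (CF * eπ) * G₁ := by
          apply mul_le_mul _ (hg'b x hxI) (abs_nonneg _) (mul_nonneg hCF.le he0.le)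
          exact le_trans (hFb x hxIcc) (mul_le_mul_of_nonneg_left (hexp x hx.2) hCF.le)
        rcases eq_or_lt_of_le hx.2 with hxπ | hxlt
        · have hz1 : |gR x| = 0 := by rw [hxπ, hgπ, abs_zero]
          rw [hz1, mul_zero, zero_add]
          have n1 : 0 ≤ (CF' * G₀) * eπ := by
            apply mul_nonneg (mul_nonneg hCF'.le hG₀.le) he0.le
          calc ‖u x - cz x‖ * |g' x| ≤ (CF * eπ) * G₁ := b2
            _ ≤ (CF' * G₀ + CF * G₁) * eπ := by nlinarith
        · have b1 : ‖DF x‖ * |gR x| ≤ (CF' * eπ) * G₀ := by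
            apply mul_le_mul _ (hgb x hxI) (abs_nonneg _) (mul_nonneg hCF'.le he0.le)
            refine le_trans (hDFb x ⟨lt_trans ha0 hx.1, hxlt⟩) ?_
            exact mul_le_mul_of_nonneg_left (hexp x hx.2) hCF'.le
          calc ‖DF x‖ * |gR x| + ‖u x - cz x‖ * |g' x| ≤ (CF' * eπ) * G₀ + (CF * eπ) * G₁ :=
                add_le_add b1 b2
            _ = (CF' * G₀ + CF * G₁) * eπ := by ring)
      n hn
    have hcong2 : (∫ x in a..π, (u x - Complex.cos (s * ↑x)) * (↑((π - x) / (π - a)) : ℂ) *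
          (↑(1/2 * (∫ y in (0:ℝ)..x, V y) - x / (2 * π) * IV) : ℂ) *
          Complex.sin ((n : ℂ) * ↑x))
        = ∫ x in a..π, h₂ x * Complex.sin ((n : ℂ) * ↑x) := by
      apply intervalIntegral.integral_congr
      intro x _
      simp only [hh₂, hgRdef, hρf, hczdef]
      push_cast
      ring
    rw [hcong2]
    refine le_trans key2 ?_
    have hfrac : 0 ≤ 1 / (1 + π * r) := div_nonneg zero_le_one hden.le
    have hnum2 : CF * G₀ * eπ + (π - a) * ((CF' * G₀ + CF * G₁) * eπ)
        ≤ C * (1 + 1 / (1 + π * r)) * eπ := by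
      have hbase : CF * G₀ + (π - a) * (CF' * G₀ + CF * G₁) ≤ C := by
        rw [hCdef]
        have n1 : 0 ≤ (π - a) * G₁ := mul_nonneg hπa.le hG₁.le
        have n2 : 0 ≤ (π - a) * G₀ * (1 + π) := by
          apply mul_nonneg (mul_nonneg hπa.le hG₀.le) (by linarith)
        linarith [hG₀.le]
      have hCle : C ≤ C * (1 + 1 / (1 + π * r)) :=
        le_mul_of_one_le_right hC.le (by linarith)
      calc CF * G₀ * eπ + (π - a) * ((CF' * G₀ + CF * G₁) * eπ)
          = (CF * G₀ + (π - a) * (CF' * G₀ + CF * G₁)) * eπ := by ring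
        _ ≤ (C * (1 + 1 / (1 + π * r))) * eπ :=
            mul_le_mul_of_nonneg_right (le_trans hbase hCle) he0.le
        _ = C * (1 + 1 / (1 + π * r)) * eπ := by ring
    calc (CF * G₀ * eπ + (π - a) * ((CF' * G₀ + CF * G₁) * eπ)) / n
        ≤ (C * (1 + 1 / (1 + π * r)) * eπ) / n := (div_le_div_iff_of_pos_right hnR).2 hnum2
      _ = C / n * eπ * (1 + 1 / (1 + π * r)) := by ring
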